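/- Let L/K be a finite field extension. Then the separable closure of K in L equals the set of elements l ∈ L such that l (as a multiplication operator) commutes with every K-linear differential operator on L, i.e. L^{sep} = C_L(D(L/K)). -/

import Mathlib

/-- The filtration of Grothendieck differential operators on the `K`-algebra `L`:
`D_0` is the set of multiplication operators and
`D_{i+1} = {δ : [δ, l·] ∈ D_i for all l ∈ L}`. -/
def diffOpFil (K L : Type*) [Field K] [Field L] [Algebra K L] :
    ℕ → Set (Module.End K L)
  | 0 => Set.range ⇑(Algebra.lmul K L)
  | n + 1 =>
      {δ | ∀ l : L, δ * Algebra.lmul K L l - Algebra.lmul K L l * δ ∈ diffOpFil K L n}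

/-- The algebra `D(L/K)` of Grothendieck differential operators on `L` over `K`,
as a subset of `End_K(L)`: the union of the filtration `diffOpFil`. -/
def diffOps (K L : Type*) [Field K] [Field L] [Algebra K L] : Set (Module.End K L) :=
  ⋃ n, diffOpFil K L n

namespace Stmt14Aux

variable (K L : Type*) [Field K] [Field L] [Algebra K L]

local notation "𝔞" => (Algebra.lmul K L)

/-- The commutator operator `δ ↦ δ * (x·) - (x·) * δ`. -/
noncomputable def T (x : L) : Module.End K (Module.End K L) :=
  LinearMap.mulRight K (𝔞 x) - LinearMap.mulLeft K (𝔞 x)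

variable {K L}

lemma T_apply (x : L) (δ : Module.End K L) : T K L x δ = δ * 𝔞 x - 𝔞 x * δ := by
  simp [T]

lemma lmul_comm (x y : L) : 𝔞 x * 𝔞 y = 𝔞 y * 𝔞 x := by
  rw [← map_mul, ← map_mul, mul_comm]

lemma T_comm (x y : L) (δ : Module.End K L) : T K L x (T K L y δ) = T K L y (T K L x δ) := by
  simp only [T_apply, mul_sub, sub_mul, mul_assoc]
  rw [lmul_comm x y]
  have h : (𝔞 x) * ((𝔞 y) * δ) = (𝔞 y) * ((𝔞 x) * δ) := by
    rw [← mul_assoc, lmul_comm, mul_assoc]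
  rw [h]; abel

lemma T_addl (x y : L) (δ : Module.End K L) :
    T K L (x + y) δ = T K L x δ + T K L y δ := by
  simp only [T_apply, map_add, add_mul, mul_add]; abel

lemma T_mul_lmul (x c : L) (δ : Module.End K L) :
    T K L x (δ * 𝔞 c) = (T K L x δ) * 𝔞 c := by
  simp only [T_apply, sub_mul, mul_assoc, lmul_comm c x]

/-- Leibniz rule for the commutator. -/
lemma T_mul (u v : L) (δ : Module.End K L) :
    T K L (u * v) δ = (T K L u δ) * 𝔞 v + 𝔞 u * (T K L v δ) := by
  simp only [T_apply, map_mul, sub_mul, mul_sub, mul_assoc]; abel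

variable (K L) in
/-- Iterated commutators along a list, innermost is the last entry. -/
noncomputable def Tapp : List L → Module.End K L → Module.End K L
  | [], δ => δ
  | x :: xs, δ => T K L x (Tapp xs δ)

@[simp] lemma Tapp_nil (δ : Module.End K L) : Tapp K L [] δ = δ := rfl

@[simp] lemma Tapp_cons (x : L) (xs : List L) (δ : Module.End K L) :
    Tapp K L (x :: xs) δ = T K L x (Tapp K L xs δ) := rfl

lemma Tapp_append (u v : List L) (δ : Module.End K L) :
    Tapp K L (u ++ v) δ = Tapp K L u (Tapp K L v δ) := by
  induction u with
  | nil => rfl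
  | cons x xs ih => simp [ih]

@[simp] lemma Tapp_zero (xs : List L) : Tapp K L xs 0 = 0 := by
  induction xs with
  | nil => rfl
  | cons x xs ih => simp [ih]

lemma Tapp_perm {u v : List L} (h : u.Perm v) (δ : Module.End K L) :
    Tapp K L u δ = Tapp K L v δ := by
  induction h generalizing δ with
  | nil => rfl
  | cons x _ ih => simp [ih]
  | swap x y l => simp [T_comm]
  | trans _ _ ih₁ ih₂ => rw [ih₁, ih₂]

lemma Tapp_replicate (n : ℕ) (x : L) (δ : Module.End K L) :
    Tapp K L (List.replicate n x) δ = (T K L x ^ n) δ := by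
  induction n generalizing δ with
  | zero => rfl
  | succ n ih =>
      simp only [List.replicate_succ, Tapp_cons, ih]
      rw [← Module.End.mul_apply, ← pow_succ', pow_succ', Module.End.mul_apply]

end Stmt14Aux

namespace Stmt14Aux
variable {K L : Type*} [Field K] [Field L] [Algebra K L]

local notation "𝔞" => (Algebra.lmul K L)

variable (K L) in
/-- `δ` commutes with multiplication by every element of `F`. -/
def Pc (F : Set L) (δ : Module.End K L) : Prop :=
  ∀ c ∈ F, δ * 𝔞 c = 𝔞 c * δ

lemma Pc.T {F : Set L} {δ : Module.End K L} (hδ : Pc K L F δ) (x : L) :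
    Pc K L F (T K L x δ) := by
  intro c hc
  simp only [T_apply, sub_mul, mul_sub]
  congr 1
  · rw [mul_assoc, lmul_comm x c, ← mul_assoc, hδ c hc, mul_assoc]
  · rw [mul_assoc, hδ c hc, ← mul_assoc, lmul_comm x c, mul_assoc]

lemma Pc.Tapp {F : Set L} {δ : Module.End K L} (hδ : Pc K L F δ) (xs : List L) :
    Pc K L F (Tapp K L xs δ) := by
  induction xs with
  | nil => exact hδ
  | cons x xs ih => exact ih.T x

lemma T_F_zero {F : Set L} {δ : Module.End K L} (hδ : Pc K L F δ) {c : L} (hc : c ∈ F) :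
    T K L c δ = 0 := by
  rw [T_apply, hδ c hc, sub_self]

lemma T_smulF {F : Set L} {δ : Module.End K L} (hδ : Pc K L F δ) {c : L} (hc : c ∈ F) (x : L) :
    T K L (c * x) δ = (T K L x δ) * 𝔞 c := by
  rw [T_mul, T_F_zero hδ hc, zero_mul, zero_add]
  exact (hδ.T x c hc).symm

lemma T_pow (r m : ℕ) [ExpChar K r] (x : L) :
    (T K L x) ^ (r ^ m) = T K L (x ^ (r ^ m)) := by
  haveI : Nontrivial (Module.End K (Module.End K L)) := by
    refine ⟨1, 0, fun h => ?_⟩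
    have := LinearMap.congr_fun h (LinearMap.id (R := K) (M := L))
    simp only [Module.End.one_apply, LinearMap.zero_apply] at this
    exact one_ne_zero (LinearMap.congr_fun this (1 : L))
  haveI : ExpChar (Module.End K (Module.End K L)) r :=
    expChar_of_injective_algebraMap (algebraMap K _).injective r
  rw [T, sub_pow_expChar_pow_of_commute (R := Module.End K (Module.End K L)) r m (LinearMap.commute_mulLeft_right _ _).symm,
    LinearMap.pow_mulRight, LinearMap.pow_mulLeft, ← map_pow]
  rfl

lemma tapp_vanish [DecidableEq L] (r m : ℕ) [ExpChar K r] {F : Set L} {δ : Module.End K L}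
    (hδ : Pc K L F δ) {w : List L} {x : L} (hx : x ^ r ^ m ∈ F)
    (hcount : r ^ m ≤ w.count x) : Tapp K L w δ = 0 := by
  have hsub : List.Sublist (List.replicate (r ^ m) x) w :=
    List.replicate_sublist_iff.mpr hcount
  obtain ⟨rest, hperm⟩ := hsub.exists_perm_append
  rw [Tapp_perm (hperm.trans List.perm_append_comm) δ, Tapp_append, Tapp_replicate,
    T_pow r m, T_F_zero hδ hx, Tapp_zero]

lemma length_eq_sum_count {α : Type*} [DecidableEq α] [Fintype α] (l : List α) :
    l.length = ∑ a : α, l.count a := by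
  induction l with
  | nil => simp
  | cons x l ih =>
      simp only [List.length_cons, ih, List.count_cons]
      rw [Finset.sum_add_distrib]
      simp [Finset.sum_ite_eq]

lemma exists_count {d q : ℕ} {w : List (Fin d)} (h : d * (q - 1) < w.length) (hq : 0 < q) :
    ∃ i, q ≤ w.count i := by
  by_contra hc
  push_neg at hc
  have : w.length ≤ d * (q - 1) := by
    rw [length_eq_sum_count w]
    calc ∑ a : Fin d, w.count a ≤ ∑ _a : Fin d, (q - 1) :=
          Finset.sum_le_sum fun i _ => Nat.le_sub_one_of_lt (hc i)
      _ = d * (q - 1) := by simp [Finset.sum_const, mul_comm]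
  omega

end Stmt14Aux

namespace Stmt14Aux
variable {K L : Type*} [Field K] [Field L] [Algebra K L]

local notation "𝔞" => (Algebra.lmul K L)

lemma T_zerol (δ : Module.End K L) : T K L 0 δ = 0 := by
  simp [T_apply]

lemma T_suml {ι : Type*} (s : Finset ι) (f : ι → L) (δ : Module.End K L) :
    T K L (∑ i ∈ s, f i) δ = ∑ i ∈ s, T K L (f i) δ := by
  classical
  induction s using Finset.induction_on with
  | empty => simp [T_zerol]
  | insert _ _ h ih => rw [Finset.sum_insert h, Finset.sum_insert h, T_addl, ih]

lemma exists_count' {ι : Type*} [Fintype ι] [DecidableEq ι] {q : ℕ} {w : List ι}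
    (h : Fintype.card ι * (q - 1) < w.length) : ∃ i, q ≤ w.count i := by
  by_contra hc
  push_neg at hc
  have : w.length ≤ Fintype.card ι * (q - 1) := by
    rw [length_eq_sum_count w]
    calc ∑ a, w.count a ≤ ∑ _a : ι, (q - 1) :=
          Finset.sum_le_sum fun i _ => Nat.le_sub_one_of_lt (hc i)
      _ = Fintype.card ι * (q - 1) := by simp [Finset.sum_const, mul_comm]
  omega

lemma tapp_mem_span {F : IntermediateField K L} {ι : Type*} [Fintype ι]
    (b : Module.Basis ι F L) {δ : Module.End K L} (hδ : Pc K L (F : Set L) δ) (xs : List L) :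
    Tapp K L xs δ ∈ Submodule.span K
      {ψ : Module.End K L | ∃ (w : List ι) (c : F),
        w.length = xs.length ∧ ψ = Tapp K L (w.map b) δ * 𝔞 (c : L)} := by
  classical
  induction xs with
  | nil =>
      apply Submodule.subset_span
      exact ⟨[], 1, rfl, by rw [List.map_nil, OneMemClass.coe_one, map_one, mul_one, Tapp_nil]⟩
  | cons x xs ih =>
      rw [Tapp_cons]
      refine Submodule.span_induction (p := fun ψ _ => T K L x ψ ∈ Submodule.span K
        {ψ : Module.End K L | ∃ (w : List ι) (c : F),
          w.length = (x :: xs).length ∧ ψ = Tapp K L (w.map b) δ * 𝔞 (c : L)})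
        ?_ ?_ ?_ ?_ ih
      · rintro ψ ⟨w, c, hlen, rfl⟩
        rw [T_mul_lmul]
        have hP : Pc K L (F : Set L) (Tapp K L (w.map b) δ) := hδ.Tapp _
        have hx : x = ∑ i, ((b.repr x i : L) * b i) := by
          conv_lhs => rw [← b.sum_repr x]
          exact Finset.sum_congr rfl fun i _ => by
            rw [Algebra.smul_def, IntermediateField.algebraMap_apply]
        have hT : T K L x (Tapp K L (w.map b) δ)
            = ∑ i, (T K L (b i) (Tapp K L (w.map b) δ)) * 𝔞 (b.repr x i : L) := by
          conv_lhs => rw [hx]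
          rw [T_suml]
          exact Finset.sum_congr rfl fun i _ =>
            T_smulF hP (SetLike.coe_mem _) (b i)
        rw [hT, Finset.sum_mul]
        refine Submodule.sum_mem _ fun i _ => Submodule.subset_span ?_
        refine ⟨i :: w, b.repr x i * c, by simp [hlen], ?_⟩
        rw [List.map_cons, Tapp_cons, mul_assoc, ← map_mul]
        norm_cast
      · simp
      · intro u v _ _ hu hv
        rw [map_add]
        exact Submodule.add_mem _ hu hv
      · intro a u _ hu
        rw [map_smul]
        exact Submodule.smul_mem _ a hu

lemma tapp_long_vanish {F : IntermediateField K L} {ι : Type*} [Fintype ι]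
    (b : Module.Basis ι F L) (r m : ℕ) [ExpChar K r] (hb : ∀ i, b i ^ r ^ m ∈ F)
    {δ : Module.End K L} (hδ : Pc K L (F : Set L) δ) {xs : List L}
    (h : Fintype.card ι * (r ^ m - 1) < xs.length) : Tapp K L xs δ = 0 := by
  classical
  have hmem := tapp_mem_span b hδ xs
  have hzero : ∀ ψ ∈ {ψ : Module.End K L | ∃ (w : List ι) (c : F),
      w.length = xs.length ∧ ψ = Tapp K L (w.map b) δ * 𝔞 (c : L)}, ψ = 0 := by
    rintro ψ ⟨w, c, hlen, rfl⟩
    obtain ⟨i, hi⟩ := exists_count' (q := r ^ m) (w := w) (by rw [hlen]; exact h)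
    have hcount : r ^ m ≤ (w.map b).count (b i) := by
      rw [List.count_map_of_injective _ _ b.injective]
      exact hi
    have : Tapp K L (w.map b) δ = 0 := tapp_vanish r m hδ (by
      exact_mod_cast (hb i)) hcount
    rw [this, zero_mul]
  have : Tapp K L xs δ ∈ Submodule.span K ({0} : Set (Module.End K L)) :=
    Submodule.span_mono (fun ψ hψ => hzero ψ hψ ▸ rfl) hmem
  rwa [Submodule.span_zero_singleton, Submodule.mem_bot] at this

end Stmt14Aux

namespace Stmt14Aux
variable {K L : Type*} [Field K] [Field L] [Algebra K L]

local notation "𝔞" => (Algebra.lmul K L)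

lemma mem_fil_of_vanish (n : ℕ) (δ : Module.End K L)
    (h : ∀ xs : List L, xs.length = n + 1 → Tapp K L xs δ = 0) :
    δ ∈ diffOpFil K L n := by
  induction n generalizing δ with
  | zero =>
      have h2 : ∀ x : L, δ * 𝔞 x = 𝔞 x * δ := fun x => by
        have := h [x] rfl
        rw [Tapp_cons, Tapp_nil, T_apply, sub_eq_zero] at this
        exact this
      refine ⟨δ 1, ?_⟩
      ext y
      have := LinearMap.congr_fun (h2 y) 1
      simpa [Module.End.mul_apply, mul_comm] using this.symm
  | succ n ih =>
      intro l
      rw [← T_apply]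
      refine ih _ fun xs hxs => ?_
      have : Tapp K L (xs ++ [l]) δ = 0 := h _ (by simp [hxs])
      rwa [Tapp_append, Tapp_cons, Tapp_nil] at this

lemma pc_mem_diffOps {F : IntermediateField K L} {ι : Type*} [Fintype ι]
    (b : Module.Basis ι F L) (r m : ℕ) [ExpChar K r] (hb : ∀ i, b i ^ r ^ m ∈ F)
    {δ : Module.End K L} (hδ : Pc K L (F : Set L) δ) : δ ∈ diffOps K L := by
  refine Set.mem_iUnion.mpr ⟨Fintype.card ι * (r ^ m - 1), ?_⟩
  refine mem_fil_of_vanish _ _ fun xs hxs => ?_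
  exact tapp_long_vanish b r m hb hδ (by omega)

end Stmt14Aux

namespace Stmt14Aux
variable {K L : Type*} [Field K] [Field L] [Algebra K L]

local notation "𝔞" => (Algebra.lmul K L)

open Polynomial in
lemma commutes_of_sep (n : ℕ) :
    ∀ δ ∈ diffOpFil K L n, ∀ l ∈ separableClosure K L, 𝔞 l * δ = δ * 𝔞 l := by
  induction n with
  | zero =>
      rintro δ ⟨w, rfl⟩ l _
      exact lmul_comm l w
  | succ n ih =>
      intro δ hδ l hl
      have hd : ∀ x : L, T K L x δ ∈ diffOpFil K L n := fun x => by
        have := hδ x; rwa [← T_apply] at this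
      have hTl : ∀ y ∈ separableClosure K L, ∀ x : L,
          𝔞 y * T K L x δ = T K L x δ * 𝔞 y := fun y hy x => ih _ (hd x) y hy
      have SC : ∀ p : K[X], T K L (aeval l p) δ
          = 𝔞 (aeval l (derivative p)) * T K L l δ := by
        intro p
        induction p using Polynomial.induction_on with
        | C c =>
            rw [aeval_C, derivative_C, map_zero, map_zero, zero_mul]
            have : 𝔞 (algebraMap K L c) = algebraMap K (Module.End K L) c :=
              AlgHom.commutes _ c
            rw [T_apply, this, Algebra.commutes, sub_self]
        | add p q hp hq =>
            simp only [map_add, T_addl, hp, hq, add_mul]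
        | monomial k c IH =>
            have e1 : aeval l (C c * X ^ (k + 1)) = aeval l (C c * X ^ k) * l := by
              simp [pow_succ, mul_assoc]
            rw [e1, T_mul, IH, mul_assoc, ← hTl l hl l, ← mul_assoc, ← map_mul,
              ← add_mul, ← map_add]
            congr 2
            rw [derivative_C_mul_X_pow, derivative_C_mul_X_pow]
            cases k with
            | zero => simp
            | succ k =>
                simp only [map_mul, aeval_C, aeval_X_pow, Nat.add_sub_cancel]
                push_cast
                ring
      have hsep : (minpoly K l).Separable := mem_separableClosure_iff.mp hl
      have hne : aeval l (derivative (minpoly K l)) ≠ 0 :=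
        hsep.aeval_derivative_ne_zero (minpoly.aeval K l)
      have hz : 𝔞 (aeval l (derivative (minpoly K l))) * T K L l δ = 0 := by
        rw [← SC (minpoly K l), minpoly.aeval, T_zerol]
      have hT0 : T K L l δ = 0 := by
        set y := aeval l (derivative (minpoly K l)) with hy
        calc T K L l δ = (𝔞 y⁻¹ * 𝔞 y) * T K L l δ := by
              rw [← map_mul, inv_mul_cancel₀ hne, map_one, one_mul]
          _ = 𝔞 y⁻¹ * (𝔞 y * T K L l δ) := mul_assoc _ _ _
          _ = 0 := by rw [hz, mul_zero]
      rw [T_apply, sub_eq_zero] at hT0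
      exact hT0.symm

end Stmt14Aux


open Stmt14Aux

/-- For a finite extension `L/K`, the separable closure of `K` in `L` is exactly the
set of elements of `L` whose multiplication operator commutes with every differential
operator: `L^{sep} = C_L(D(L/K))`. -/
theorem stmt14 (K L : Type*) [Field K] [Field L] [Algebra K L] [FiniteDimensional K L] :
    (separableClosure K L : Set L) =
      {l : L | ∀ δ ∈ diffOps K L,
        Algebra.lmul K L l * δ = δ * Algebra.lmul K L l} := by

  ext l
  simp only [SetLike.mem_coe, Set.mem_setOf_eq]
  constructor
  · intro hl δ hδ
    obtain ⟨s, ⟨n, rfl⟩, hn⟩ := hδ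
    exact commutes_of_sep n δ hn l hl
  · intro h
    set F := separableClosure K L with hF
    obtain ⟨r, hr⟩ := ExpChar.exists K
    haveI := hr
    haveI : FiniteDimensional F L := Module.Finite.right (F := K) (K := F) (A := L)
    haveI : ExpChar F r := expChar_of_injective_algebraMap (algebraMap K F).injective r
    set b := Module.finBasis F L with hbdef
    have hex : ∀ i, ∃ nn : ℕ, b i ^ r ^ nn ∈ F := fun i => by
      obtain ⟨nn, y, hy⟩ := IsPurelyInseparable.pow_mem F r (b i)
      refine ⟨nn, ?_⟩
      rw [← hy, IntermediateField.algebraMap_apply]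
      exact y.2
    choose nn hnn using hex
    set m := Finset.univ.sup nn with hm
    have hb : ∀ i, b i ^ r ^ m ∈ F := fun i => by
      have hle : nn i ≤ m := Finset.le_sup (Finset.mem_univ i)
      have : r ^ m = r ^ nn i * r ^ (m - nn i) := by
        rw [← pow_add]; congr 1; omega
      rw [this, pow_mul]
      exact pow_mem (hnn i) _
    obtain ⟨W, hW⟩ := (Submodule.span F ({1} : Set L)).exists_isCompl
    set π : L →ₗ[F] L :=
      (Submodule.span F ({1} : Set L)).subtype.comp
        (Submodule.linearProjOfIsCompl _ W hW) with hπ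
    set δ : Module.End K L := π.restrictScalars K with hδdef
    have hP : Pc K L (F : Set L) δ := by
      intro c hc
      ext z
      have hs : ∀ w : L, (⟨c, hc⟩ : F) • w = c * w := fun w => by
        rw [Algebra.smul_def, IntermediateField.algebraMap_apply]
      show δ ((Algebra.lmul K L c) z) = (Algebra.lmul K L c) (δ z)
      have happ : ∀ w : L, (Algebra.lmul K L c) w = c * w := fun w => by
        rw [Algebra.coe_lmul_eq_mul, LinearMap.mul_apply']
      rw [happ, happ, hδdef, LinearMap.restrictScalars_apply,
        LinearMap.restrictScalars_apply, ← hs z, map_smul, hs]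
    have hδmem : δ ∈ diffOps K L := pc_mem_diffOps b r m hb hP
    have hcomm := LinearMap.congr_fun (h δ hδmem) 1
    have h1mem : (1 : L) ∈ Submodule.span F ({1} : Set L) :=
      Submodule.mem_span_singleton_self 1
    have hπ1 : π (1 : L) = 1 := by
      rw [hπ, LinearMap.comp_apply]
      have e0 : (Submodule.span F ({1} : Set L)).linearProjOfIsCompl W hW 1
          = ⟨1, h1mem⟩ := Submodule.linearProjOfIsCompl_apply_left hW ⟨1, h1mem⟩
      rw [e0]
      rfl
    have hπl : π l ∈ Submodule.span F ({1} : Set L) := by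
      rw [hπ, LinearMap.comp_apply]
      exact SetLike.coe_mem _
    have hl2 : l = π l := by
      simp only [Module.End.mul_apply] at hcomm
      have e1 : (Algebra.lmul K L l) (δ 1) = l := by
        rw [hδdef, LinearMap.restrictScalars_apply, hπ1, Algebra.coe_lmul_eq_mul,
          LinearMap.mul_apply', mul_one]
      have e2 : δ ((Algebra.lmul K L l) 1) = π l := by
        rw [Algebra.coe_lmul_eq_mul, LinearMap.mul_apply', mul_one, hδdef,
          LinearMap.restrictScalars_apply]
      rw [e1, e2] at hcomm
      exact hcomm
    rw [← hl2] at hπl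
    obtain ⟨a, ha⟩ := Submodule.mem_span_singleton.mp hπl
    have : l = (a : L) := by
      rw [← ha, Algebra.smul_def, IntermediateField.algebraMap_apply, mul_one]
    rw [this]
    exact a.2
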